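/- Let S = { (B₁, B₂) : B₁, B₂ are Hermitian n×n complex matrices with B₁² + B₂² ≤ I_n } (a convex subset of the real vector space of pairs of n×n complex matrices). If B₁, B₂ are Hermitian n×n complex matrices with B₁² + B₂² = I_n, then (B₁, B₂) is an extreme point of S. -/

import Mathlib

open Matrix
open scoped ComplexOrder

private lemma psd_rsmul {m : ℕ} {A : Matrix (Fin m) (Fin m) ℂ} (h : A.PosSemidef)
    {r : ℝ} (hr : 0 ≤ r) : (r • A).PosSemidef := by
  refine Matrix.PosSemidef.of_dotProduct_mulVec_nonneg ?_ (fun x => ?_)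
  · unfold Matrix.IsHermitian
    rw [conjTranspose_smul, h.1]
    norm_num
  · rw [smul_mulVec, dotProduct_smul]
    have := h.dotProduct_mulVec_nonneg x
    rw [Complex.real_smul]
    exact mul_nonneg (by exact_mod_cast hr) this

private lemma psd_neg_eq_zero {m : ℕ} {A : Matrix (Fin m) (Fin m) ℂ} (h : A.PosSemidef)
    (h' : (-A).PosSemidef) : A = 0 := by
  have key : ∀ x : Fin m → ℂ, A *ᵥ x = 0 := by
    intro x
    rw [← h.dotProduct_mulVec_zero_iff]
    have h1 := h.dotProduct_mulVec_nonneg x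
    have h2 := h'.dotProduct_mulVec_nonneg x
    rw [neg_mulVec, dotProduct_neg] at h2
    exact le_antisymm (neg_nonneg.mp h2) h1
  ext i j
  have := congrFun (key (Pi.single j 1)) i
  simpa using this

private lemma rel_aux {m : ℕ} {a b : ℝ} (hb : 0 < b) (hab : a + b = 1)
    {u v w : Matrix (Fin m) (Fin m) ℂ} (h : a • u + b • v = w) :
    v - w = -((a / b) • (u - w)) := by
  have h0 : a • (u - w) + b • (v - w) = 0 := by
    have h1 : a • u + b • v - (a + b) • w = 0 := by
      rw [h, hab, one_smul, sub_self]
    rw [← h1]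
    match_scalars <;> ring
  have h2 : b • (v - w) = -(a • (u - w)) := eq_neg_of_add_eq_zero_left (by rw [add_comm] at h0; exact h0)
  have h3 := congrArg (fun M => b⁻¹ • M) h2
  simp only [smul_smul, smul_neg] at h3
  rw [inv_mul_cancel₀ hb.ne', one_smul] at h3
  rw [h3, inv_mul_eq_div]

private lemma expand_aux {m : ℕ} {X₁ X₂ Y₁ Y₂ : Matrix (Fin m) (Fin m) ℂ}
    (hsum : X₁ * X₁ + X₂ * X₂ = 1) :
    (1 : Matrix (Fin m) (Fin m) ℂ) - ((X₁ + Y₁) * (X₁ + Y₁) + (X₂ + Y₂) * (X₂ + Y₂)) =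
      -((X₁ * Y₁ + Y₁ * X₁ + X₂ * Y₂ + Y₂ * X₂) + (Y₁ * Y₁ + Y₂ * Y₂)) := by
  rw [← hsum]; noncomm_ring

theorem extreme_point_of_unit_sphere_pairs {n : ℕ}
    (B₁ B₂ : Matrix (Fin n) (Fin n) ℂ)
    (h₁ : B₁.IsHermitian) (h₂ : B₂.IsHermitian)
    (hsum : B₁ * B₁ + B₂ * B₂ = 1) :
    (B₁, B₂) ∈ Set.extremePoints ℝ
      {p : Matrix (Fin n) (Fin n) ℂ × Matrix (Fin n) (Fin n) ℂ |
        p.1.IsHermitian ∧ p.2.IsHermitian ∧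
        ((1 : Matrix (Fin n) (Fin n) ℂ) - (p.1 * p.1 + p.2 * p.2)).PosSemidef} := by
  refine ⟨⟨h₁, h₂, by rw [hsum, sub_self]; exact Matrix.PosSemidef.zero⟩,
    fun p hp q hq hseg => ?_⟩
  obtain ⟨a, b, ha, hb, hab, hs⟩ := hseg
  obtain ⟨hp1herm, hp2herm, hppsd⟩ := hp
  obtain ⟨hq1herm, hq2herm, hqpsd⟩ := hq
  have hs1 : a • p.1 + b • q.1 = B₁ := congrArg Prod.fst hs
  have hs2 : a • p.2 + b • q.2 = B₂ := congrArg Prod.snd hs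
  set P₁ := p.1 - B₁ with hP₁
  set P₂ := p.2 - B₂ with hP₂
  set c := a / b with hc
  have hcpos : 0 < c := div_pos ha hb
  have hq1 : q.1 - B₁ = -(c • P₁) := rel_aux hb hab hs1
  have hq2 : q.2 - B₂ = -(c • P₂) := rel_aux hb hab hs2
  set L := B₁ * P₁ + P₁ * B₁ + B₂ * P₂ + P₂ * B₂ with hL
  set K := P₁ * P₁ + P₂ * P₂ with hK
  have hy : (-(L + K)).PosSemidef := by
    have e1 : p.1 = B₁ + P₁ := by rw [hP₁]; abel
    have e2 : p.2 = B₂ + P₂ := by rw [hP₂]; abel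
    rw [e1, e2, expand_aux hsum] at hppsd
    exact hppsd
  have hz : (c • L - (c * c) • K).PosSemidef := by
    have e1 : q.1 = B₁ + -(c • P₁) := by rw [← hq1]; abel
    have e2 : q.2 = B₂ + -(c • P₂) := by rw [← hq2]; abel
    rw [e1, e2, expand_aux hsum] at hqpsd
    have : -((B₁ * -(c • P₁) + -(c • P₁) * B₁ + B₂ * -(c • P₂) + -(c • P₂) * B₂) +
        (-(c • P₁) * -(c • P₁) + -(c • P₂) * -(c • P₂))) = c • L - (c * c) • K := by
      simp only [mul_neg, neg_mul, neg_neg, mul_smul_comm, smul_mul_assoc, smul_smul, hL, hK]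
      match_scalars <;> ring
    rw [this] at hqpsd
    exact hqpsd
  have hcomb : (c⁻¹ • (c • L - (c * c) • K) + -(L + K)).PosSemidef :=
    (psd_rsmul hz (inv_nonneg.mpr hcpos.le)).add hy
  have hcombeq : c⁻¹ • (c • L - (c * c) • K) + -(L + K) = -((1 + c) • K) := by
    match_scalars <;> field_simp <;> ring
  rw [hcombeq] at hcomb
  have hnegK : (-K).PosSemidef := by
    have := psd_rsmul hcomb (inv_nonneg.mpr (by linarith : (0:ℝ) ≤ 1 + c))
    have heq : (1 + c)⁻¹ • -((1 + c) • K) = -K := by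
      rw [smul_neg, smul_smul, inv_mul_cancel₀ (by linarith : (1:ℝ) + c ≠ 0), one_smul]
    rwa [heq] at this
  have hP₁herm : P₁.IsHermitian := hp1herm.sub h₁
  have hP₂herm : P₂.IsHermitian := hp2herm.sub h₂
  have hKpsd : K.PosSemidef := by
    have := (Matrix.posSemidef_conjTranspose_mul_self P₁).add
      (Matrix.posSemidef_conjTranspose_mul_self P₂)
    rwa [hP₁herm.eq, hP₂herm.eq] at this
  have hK0 : K = 0 := psd_neg_eq_zero hKpsd hnegK
  have hA : P₁ᴴ * P₁ = -(P₂ᴴ * P₂) := by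
    rw [hP₁herm.eq, hP₂herm.eq]
    have : P₁ * P₁ + P₂ * P₂ = 0 := hK0
    linear_combination (norm := noncomm_ring) this
  have hP₁0 : P₁ = 0 := by
    rw [← Matrix.conjTranspose_mul_self_eq_zero (A := P₁)]
    refine psd_neg_eq_zero (Matrix.posSemidef_conjTranspose_mul_self P₁) ?_
    rw [hA, neg_neg]
    exact Matrix.posSemidef_conjTranspose_mul_self P₂
  have hP₂0 : P₂ = 0 := by
    rw [← Matrix.conjTranspose_mul_self_eq_zero (A := P₂)]
    have : P₂ᴴ * P₂ = 0 := by
      have := hA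
      rw [hP₁0] at this
      simpa using this.symm
    exact this
  have hp1 : p.1 = B₁ := sub_eq_zero.mp hP₁0
  have hp2 : p.2 = B₂ := sub_eq_zero.mp hP₂0
  have hq1' : q.1 = B₁ := by
    have := hq1
    rw [hP₁0] at this
    simp only [smul_zero, neg_zero] at this
    exact sub_eq_zero.mp this
  have hq2' : q.2 = B₂ := by
    have := hq2
    rw [hP₂0] at this
    simp only [smul_zero, neg_zero] at this
    exact sub_eq_zero.mp this
  exact Prod.ext hp1 hp2
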